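/- Let R be a Γ-graded integral domain and Y a nonempty subset of HStar_f(R). Then the supremum ⋁(Y) is a finite-type homogeneous star operation, and for every nonzero homogeneous fractional ideal A of R, A^{⋁(Y)} = ⋃ { A^{σ₁∘⋯∘σₙ} : σ₁,…,σₙ ∈ Y, n ∈ ℕ }. -/

import Mathlib

open FractionalIdeal
open scoped Classical

section Setup

variable {Γ : Type*} [AddCommMonoid Γ] [LinearOrder Γ] [IsOrderedCancelAddMonoid Γ] [DecidableEq Γ]
  {R : Type*} [CommRing R] [IsDomain R]
  (𝒜 : Γ → AddSubgroup R) [GradedRing 𝒜]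
  (K : Type*) [Field K] [Algebra R K] [IsFractionRing R K]

/-- The integral ideal corresponding to a fractional ideal contained in `R`. -/
def idealOf (J : FractionalIdeal (nonZeroDivisors R) K) : Ideal R :=
  (J : Submodule R K).comap (Algebra.linearMap R K)

/-- An integral ideal is homogeneous if it contains all homogeneous components of its elements. -/
def IsHomIdeal (I : Ideal R) : Prop := ∀ f ∈ I, ∀ γ : Γ, GradedRing.proj 𝒜 γ f ∈ I

/-- `C(I)`: the homogeneous ideal generated by the homogeneous components of elements of `I`. -/
def homC (I : Ideal R) : Ideal R :=
  Ideal.span {x | ∃ f ∈ I, ∃ γ : Γ, x = GradedRing.proj 𝒜 γ f}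

/-- `C(J)` for a fractional ideal `J ⊆ R`, as a fractional ideal. -/
def Cfrac (J : FractionalIdeal (nonZeroDivisors R) K) : FractionalIdeal (nonZeroDivisors R) K :=
  ↑(homC 𝒜 (idealOf K J))

/-- A fractional ideal is homogeneous if some nonzero homogeneous `s ∈ R` multiplies it into a
homogeneous integral ideal. -/
def IsHomFrac (A : FractionalIdeal (nonZeroDivisors R) K) : Prop :=
  ∃ s : R, s ≠ 0 ∧ SetLike.IsHomogeneousElem 𝒜 s ∧
    spanSingleton (nonZeroDivisors R) (algebraMap R K s) * A ≤ 1 ∧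
    IsHomIdeal 𝒜 (idealOf K (spanSingleton (nonZeroDivisors R) (algebraMap R K s) * A))

/-- A homogeneous element of the homogeneous quotient field, viewed inside `K`. -/
def IsHomElem (x : K) : Prop :=
  ∃ a b : R, SetLike.IsHomogeneousElem 𝒜 a ∧ SetLike.IsHomogeneousElem 𝒜 b ∧ b ≠ 0 ∧
    x * algebraMap R K b = algebraMap R K a

end Setup

/-- A homogeneous star operation on the graded domain `R`. -/
structure HomStarOp {Γ : Type*} [AddCommMonoid Γ] [LinearOrder Γ] [IsOrderedCancelAddMonoid Γ] [DecidableEq Γ]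
    {R : Type*} [CommRing R] [IsDomain R] (𝒜 : Γ → AddSubgroup R) [GradedRing 𝒜]
    (K : Type*) [Field K] [Algebra R K] [IsFractionRing R K] where
  toFun : FractionalIdeal (nonZeroDivisors R) K → FractionalIdeal (nonZeroDivisors R) K
  hom : ∀ A, A ≠ 0 → IsHomFrac 𝒜 K A → IsHomFrac 𝒜 K (toFun A)
  map_span : ∀ x : K, x ≠ 0 → IsHomElem 𝒜 K x →
    toFun (spanSingleton (nonZeroDivisors R) x) = spanSingleton (nonZeroDivisors R) x
  map_smul : ∀ x : K, x ≠ 0 → IsHomElem 𝒜 K x → ∀ A, A ≠ 0 → IsHomFrac 𝒜 K A →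
    toFun (spanSingleton (nonZeroDivisors R) x * A) = spanSingleton (nonZeroDivisors R) x * toFun A
  le_star : ∀ A, A ≠ 0 → IsHomFrac 𝒜 K A → A ≤ toFun A
  mono : ∀ A B, A ≠ 0 → B ≠ 0 → IsHomFrac 𝒜 K A → IsHomFrac 𝒜 K B → A ≤ B → toFun A ≤ toFun B
  idem : ∀ A, A ≠ 0 → IsHomFrac 𝒜 K A → toFun (toFun A) = toFun A

/-- A classical star operation on the domain `R`. -/
structure StarOp (R : Type*) [CommRing R] [IsDomain R]
    (K : Type*) [Field K] [Algebra R K] [IsFractionRing R K] where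
  toFun : FractionalIdeal (nonZeroDivisors R) K → FractionalIdeal (nonZeroDivisors R) K
  map_span : ∀ x : K, x ≠ 0 →
    toFun (spanSingleton (nonZeroDivisors R) x) = spanSingleton (nonZeroDivisors R) x
  map_smul : ∀ x : K, x ≠ 0 → ∀ A, A ≠ 0 →
    toFun (spanSingleton (nonZeroDivisors R) x * A) = spanSingleton (nonZeroDivisors R) x * toFun A
  le_star : ∀ A, A ≠ 0 → A ≤ toFun A
  mono : ∀ A B, A ≠ 0 → B ≠ 0 → A ≤ B → toFun A ≤ toFun B
  idem : ∀ A, A ≠ 0 → toFun (toFun A) = toFun A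

section EStar

variable {Γ : Type*} [AddCommMonoid Γ] [LinearOrder Γ] [IsOrderedCancelAddMonoid Γ] [DecidableEq Γ]
  {R : Type*} [CommRing R] [IsDomain R]
  (𝒜 : Γ → AddSubgroup R) [GradedRing 𝒜]
  (K : Type*) [Field K] [Algebra R K] [IsFractionRing R K]

/-- The submodule `⋂ { z⁻¹ (C(zA))^⋆ : 0 ≠ z ∈ (R : A) }`. -/
def eStarSub (s : HomStarOp 𝒜 K) (A : FractionalIdeal (nonZeroDivisors R) K) : Submodule R K :=
  ⨅ z ∈ {z : K | z ≠ 0 ∧ spanSingleton (nonZeroDivisors R) z * A ≤ 1},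
    ↑(spanSingleton (nonZeroDivisors R) z⁻¹ *
      s.toFun (Cfrac 𝒜 K (spanSingleton (nonZeroDivisors R) z * A)))

/-- The extension `e(⋆)` of a homogeneous star operation `⋆`,
`A^{e(⋆)} := ⋂ { z⁻¹ (C(zA))^⋆ : 0 ≠ z ∈ (R : A) }` (which is a fractional ideal whenever
`A` is a nonzero fractional ideal). -/
noncomputable def eStar (s : HomStarOp 𝒜 K) (A : FractionalIdeal (nonZeroDivisors R) K) :
    FractionalIdeal (nonZeroDivisors R) K :=
  if h : IsFractional (nonZeroDivisors R) (eStarSub 𝒜 K s A) then ⟨_, h⟩ else 0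

end EStar


/-- `A^{★_f}` as a set: the union of `B^★` over finitely generated `B ⊆ A`. -/
def finTypeSet {R : Type*} [CommRing R] [IsDomain R]
    (K : Type*) [Field K] [Algebra R K] [IsFractionRing R K]
    (t : FractionalIdeal (nonZeroDivisors R) K → FractionalIdeal (nonZeroDivisors R) K)
    (A : FractionalIdeal (nonZeroDivisors R) K) : Set K :=
  ⋃ B ∈ {B : FractionalIdeal (nonZeroDivisors R) K |
      B ≠ 0 ∧ B ≤ A ∧ (B : Submodule R K).FG}, {x : K | x ∈ t B}

/-- `A^{⋆_f}` as a set: the union of `B^⋆` over finitely generated homogeneous `B ⊆ A`. -/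
def homFinTypeSet {Γ : Type*} [AddCommMonoid Γ] [LinearOrder Γ] [IsOrderedCancelAddMonoid Γ] [DecidableEq Γ]
    {R : Type*} [CommRing R] [IsDomain R]
    (𝒜 : Γ → AddSubgroup R) [GradedRing 𝒜]
    (K : Type*) [Field K] [Algebra R K] [IsFractionRing R K]
    (t : FractionalIdeal (nonZeroDivisors R) K → FractionalIdeal (nonZeroDivisors R) K)
    (A : FractionalIdeal (nonZeroDivisors R) K) : Set K :=
  ⋃ B ∈ {B : FractionalIdeal (nonZeroDivisors R) K |
      B ≠ 0 ∧ B ≤ A ∧ IsHomFrac 𝒜 K B ∧ (B : Submodule R K).FG}, {x : K | x ∈ t B}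

/-- A homogeneous star operation is of finite type if
`A^⋆ = ⋃ {B^⋆ : B ⊆ A finitely generated homogeneous}`. -/
def IsFiniteTypeHomStar {Γ : Type*} [AddCommMonoid Γ] [LinearOrder Γ] [IsOrderedCancelAddMonoid Γ] [DecidableEq Γ]
    {R : Type*} [CommRing R] [IsDomain R]
    (𝒜 : Γ → AddSubgroup R) [GradedRing 𝒜]
    (K : Type*) [Field K] [Algebra R K] [IsFractionRing R K]
    (u : HomStarOp 𝒜 K) : Prop :=
  ∀ A : FractionalIdeal (nonZeroDivisors R) K, A ≠ 0 → IsHomFrac 𝒜 K A →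
    {x : K | x ∈ u.toFun A} = homFinTypeSet 𝒜 K u.toFun A


set_option linter.unusedSectionVars false

section StarSup

variable {Γ : Type*} [AddCommMonoid Γ] [LinearOrder Γ] [IsOrderedCancelAddMonoid Γ] [DecidableEq Γ]
  {R : Type*} [CommRing R] [IsDomain R]
  {𝒜 : Γ → AddSubgroup R} [GradedRing 𝒜]
  {K : Type*} [Field K] [Algebra R K] [IsFractionRing R K]

namespace StarSup

lemma mem_idealOf {J : FractionalIdeal (nonZeroDivisors R) K} {r : R} :
    r ∈ idealOf K J ↔ algebraMap R K r ∈ J := Iff.rfl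

lemma isHomIdeal_iff {I : Ideal R} : IsHomIdeal 𝒜 I ↔ Ideal.IsHomogeneous 𝒜 I := by
  constructor
  · intro h γ r hr
    have := h r hr γ
    rwa [GradedRing.proj_apply] at this
  · intro h r hr γ
    rw [GradedRing.proj_apply]
    exact h γ hr

lemma aK_inj : Function.Injective (algebraMap R K) := IsFractionRing.injective R K

lemma aK_ne {s : R} (hs : s ≠ 0) : algebraMap R K s ≠ 0 := by
  intro h
  exact hs (aK_inj (by rw [h, _root_.map_zero]))

lemma idealOf_coeIdeal (I : Ideal R) :
    idealOf K (I : FractionalIdeal (nonZeroDivisors R) K) = I := by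
  ext r
  rw [mem_idealOf, FractionalIdeal.mem_coeIdeal]
  constructor
  · rintro ⟨a, ha, h⟩
    rwa [← aK_inj h]
  · intro h; exact ⟨r, h, rfl⟩

lemma coeIdeal_idealOf {J : FractionalIdeal (nonZeroDivisors R) K} (hJ : J ≤ 1) :
    (↑(idealOf K J) : FractionalIdeal (nonZeroDivisors R) K) = J := by
  apply FractionalIdeal.ext
  intro x
  rw [FractionalIdeal.mem_coeIdeal]
  constructor
  · rintro ⟨a, ha, rfl⟩
    exact ha
  · intro hx
    obtain ⟨r, hr⟩ := (FractionalIdeal.mem_one_iff _).mp (hJ hx)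
    exact ⟨r, by rwa [mem_idealOf, hr], hr⟩

lemma mem_span_mul {z x : K} {A : FractionalIdeal (nonZeroDivisors R) K} :
    x ∈ spanSingleton (nonZeroDivisors R) z * A ↔ ∃ a ∈ A, z * a = x := by
  rw [← FractionalIdeal.mem_coe, FractionalIdeal.coe_mul, FractionalIdeal.coe_spanSingleton]
  simp [Submodule.mem_span_singleton_mul]

lemma coeIdeal_span_mul (s : R) (I : Ideal R) :
    (↑(Ideal.span {s} * I) : FractionalIdeal (nonZeroDivisors R) K)
      = spanSingleton (nonZeroDivisors R) (algebraMap R K s) * ↑I := by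
  rw [FractionalIdeal.coeIdeal_mul, FractionalIdeal.coeIdeal_span_singleton]

lemma span_mul_le_one {s : R} {J : FractionalIdeal (nonZeroDivisors R) K} (hJ : J ≤ 1) :
    spanSingleton (nonZeroDivisors R) (algebraMap R K s) * J ≤ 1 := by
  have h1 : spanSingleton (nonZeroDivisors R) (algebraMap R K s) * J ≤
      spanSingleton (nonZeroDivisors R) (algebraMap R K s) * 1 :=
    mul_right_mono hJ
  rw [mul_one] at h1
  refine h1.trans (FractionalIdeal.spanSingleton_le_iff_mem.mpr ?_)
  rw [FractionalIdeal.mem_one_iff]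
  exact ⟨s, rfl⟩

lemma proj_mul_left {s : R} {d : Γ} (hs : s ∈ 𝒜 d) (f : R) (γ : Γ) :
    s * GradedRing.proj 𝒜 γ f = GradedRing.proj 𝒜 (d + γ) (s * f) := by
  letI : AddLeftCancelMonoid Γ :=
    { (inferInstance : AddMonoid Γ), (inferInstance : IsLeftCancelAdd Γ) with }
  rw [GradedRing.proj_apply, GradedRing.proj_apply,
    DirectSum.coe_decompose_mul_add_of_left_mem 𝒜 hs]

lemma isHomIdeal_span_mul {s : R} (hs : SetLike.IsHomogeneousElem 𝒜 s) {I : Ideal R}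
    (hI : IsHomIdeal 𝒜 I) : IsHomIdeal 𝒜 (Ideal.span {s} * I) := by
  rw [isHomIdeal_iff] at hI ⊢
  exact (Ideal.homogeneous_span 𝒜 {s} (by rintro x rfl; exact hs)).mul hI

lemma isHomIdeal_sup {I J : Ideal R} (hI : IsHomIdeal 𝒜 I) (hJ : IsHomIdeal 𝒜 J) :
    IsHomIdeal 𝒜 (I ⊔ J) := by
  intro f hf γ
  obtain ⟨a, ha, b, hb, rfl⟩ := Submodule.mem_sup.mp hf
  rw [_root_.map_add]
  exact Submodule.add_mem_sup (hI a ha γ) (hJ b hb γ)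

lemma witness_change {B : FractionalIdeal (nonZeroDivisors R) K} (hB : IsHomFrac 𝒜 K B)
    {s : R} (hs0 : s ≠ 0) (hs : SetLike.IsHomogeneousElem 𝒜 s)
    (hle : spanSingleton (nonZeroDivisors R) (algebraMap R K s) * B ≤ 1) :
    IsHomIdeal 𝒜 (idealOf K (spanSingleton (nonZeroDivisors R) (algebraMap R K s) * B)) := by
  obtain ⟨s', hs'0, hs'h, hs'le, hs'I⟩ := hB
  set J := spanSingleton (nonZeroDivisors R) (algebraMap R K s) * B with hJ
  set J' := spanSingleton (nonZeroDivisors R) (algebraMap R K s') * B with hJ'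
  have hcoe : (↑(Ideal.span {s'} * idealOf K J) : FractionalIdeal (nonZeroDivisors R) K)
      = ↑(Ideal.span {s} * idealOf K J') := by
    rw [coeIdeal_span_mul, coeIdeal_span_mul, coeIdeal_idealOf hle, coeIdeal_idealOf hs'le,
      hJ, hJ']
    ring
  have heq : Ideal.span {s'} * idealOf K J = Ideal.span {s} * idealOf K J' :=
    FractionalIdeal.coeIdeal_injective hcoe
  have hM : IsHomIdeal 𝒜 (Ideal.span {s} * idealOf K J') := isHomIdeal_span_mul hs hs'I
  intro f hf γ
  have h1 : s' * f ∈ Ideal.span {s} * idealOf K J' := by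
    rw [← heq]
    exact Ideal.mul_mem_mul (Ideal.mem_span_singleton_self s') hf
  obtain ⟨d', hd'⟩ := hs'h
  have h2 : s' * GradedRing.proj 𝒜 γ f ∈ Ideal.span {s'} * idealOf K J := by
    rw [heq, proj_mul_left hd']
    exact hM _ h1 _
  obtain ⟨c, hc, hcEq⟩ := Ideal.mem_span_singleton_mul.mp h2
  rwa [← mul_left_cancel₀ hs'0 hcEq]

lemma isHomFrac_sup {A B : FractionalIdeal (nonZeroDivisors R) K}
    (hA : IsHomFrac 𝒜 K A) (hB : IsHomFrac 𝒜 K B) : IsHomFrac 𝒜 K (A + B) := by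
  obtain ⟨s, hs0, hsh, hsle, hsI⟩ := hA
  obtain ⟨t, ht0, hth, htle, htI⟩ := hB
  refine ⟨s * t, mul_ne_zero hs0 ht0, SetLike.IsHomogeneousElem.mul hsh hth, ?_, ?_⟩
  · rw [_root_.map_mul, ← FractionalIdeal.spanSingleton_mul_spanSingleton, mul_add]
    apply sup_le
    · rw [mul_comm (spanSingleton _ _), mul_assoc]
      exact span_mul_le_one hsle
    · rw [mul_assoc]
      exact span_mul_le_one htle
  · have hkey : spanSingleton (nonZeroDivisors R) (algebraMap R K (s * t)) * (A + B)
        = ↑(Ideal.span {t} * idealOf K (spanSingleton (nonZeroDivisors R) (algebraMap R K s) * A)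
            ⊔ Ideal.span {s} * idealOf K (spanSingleton (nonZeroDivisors R) (algebraMap R K t) * B)) := by
      rw [FractionalIdeal.coeIdeal_sup, coeIdeal_span_mul, coeIdeal_span_mul,
        coeIdeal_idealOf hsle, coeIdeal_idealOf htle, mul_add, _root_.map_mul,
        ← FractionalIdeal.spanSingleton_mul_spanSingleton]
      ring
    rw [hkey, idealOf_coeIdeal]
    exact isHomIdeal_sup (isHomIdeal_span_mul hth hsI) (isHomIdeal_span_mul hsh htI)

lemma isHomFrac_spanSingleton {x : K} (hx : IsHomElem 𝒜 K x) :
    IsHomFrac 𝒜 K (spanSingleton (nonZeroDivisors R) x) := by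
  obtain ⟨a, b, hah, hbh, hb0, hab⟩ := hx
  have h1 : spanSingleton (nonZeroDivisors R) (algebraMap R K b)
        * spanSingleton (nonZeroDivisors R) x
      = ↑(Ideal.span {a} : Ideal R) := by
    rw [FractionalIdeal.spanSingleton_mul_spanSingleton, FractionalIdeal.coeIdeal_span_singleton,
      mul_comm, hab]
  refine ⟨b, hb0, hbh, ?_, ?_⟩
  · rw [h1]
    exact FractionalIdeal.coeIdeal_le_one
  · rw [h1, idealOf_coeIdeal]
    rw [isHomIdeal_iff]
    exact Ideal.homogeneous_span 𝒜 {a} (by rintro y rfl; exact hah)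

lemma isHomFrac_one : IsHomFrac 𝒜 K (1 : FractionalIdeal (nonZeroDivisors R) K) := by
  have : IsHomElem 𝒜 K (1 : K) :=
    ⟨1, 1, SetLike.isHomogeneousElem_one 𝒜, SetLike.isHomogeneousElem_one 𝒜, one_ne_zero, by rw [one_mul]⟩
  simpa [FractionalIdeal.spanSingleton_one] using isHomFrac_spanSingleton this

lemma isHomFrac_span_mul {x : K} (hx : IsHomElem 𝒜 K x)
    {A : FractionalIdeal (nonZeroDivisors R) K} (hA : IsHomFrac 𝒜 K A) :
    IsHomFrac 𝒜 K (spanSingleton (nonZeroDivisors R) x * A) := by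
  obtain ⟨a, b, hah, hbh, hb0, hab⟩ := hx
  obtain ⟨s, hs0, hsh, hsle, hsI⟩ := hA
  have hkey : spanSingleton (nonZeroDivisors R) (algebraMap R K (b * s))
        * (spanSingleton (nonZeroDivisors R) x * A)
      = ↑(Ideal.span {a} * idealOf K (spanSingleton (nonZeroDivisors R) (algebraMap R K s) * A)) := by
    rw [coeIdeal_span_mul, coeIdeal_idealOf hsle, _root_.map_mul,
      ← FractionalIdeal.spanSingleton_mul_spanSingleton, ← mul_assoc,
      mul_comm (spanSingleton (nonZeroDivisors R) (algebraMap R K b)),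
      mul_assoc (spanSingleton (nonZeroDivisors R) (algebraMap R K s)),
      FractionalIdeal.spanSingleton_mul_spanSingleton, mul_comm ((algebraMap R K) b) x, hab]
    ring
  refine ⟨b * s, mul_ne_zero hb0 hs0, SetLike.IsHomogeneousElem.mul hbh hsh, ?_, ?_⟩
  · rw [hkey]
    exact FractionalIdeal.coeIdeal_le_one
  · rw [hkey, idealOf_coeIdeal]
    exact isHomIdeal_span_mul hah hsI
/-- Apply a list of homogeneous star operations (rightmost first). -/
def applyList (L : List (HomStarOp 𝒜 K)) (A : FractionalIdeal (nonZeroDivisors R) K) :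
    FractionalIdeal (nonZeroDivisors R) K :=
  (L.foldr (fun σ f => σ.toFun ∘ f) id) A

@[simp] lemma applyList_nil (A : FractionalIdeal (nonZeroDivisors R) K) :
    applyList ([] : List (HomStarOp 𝒜 K)) A = A := rfl

@[simp] lemma applyList_cons (σ : HomStarOp 𝒜 K) (L : List (HomStarOp 𝒜 K))
    (A : FractionalIdeal (nonZeroDivisors R) K) :
    applyList (σ :: L) A = σ.toFun (applyList L A) := rfl

lemma applyList_append (L₁ L₂ : List (HomStarOp 𝒜 K)) (A : FractionalIdeal (nonZeroDivisors R) K) :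
    applyList (L₁ ++ L₂) A = applyList L₁ (applyList L₂ A) := by
  induction L₁ with
  | nil => rfl
  | cons σ L ih => simp [applyList_cons, ih]

lemma applyList_facts (L : List (HomStarOp 𝒜 K)) {A : FractionalIdeal (nonZeroDivisors R) K}
    (h0 : A ≠ 0) (hh : IsHomFrac 𝒜 K A) :
    A ≤ applyList L A ∧ applyList L A ≠ 0 ∧ IsHomFrac 𝒜 K (applyList L A) := by
  induction L with
  | nil => exact ⟨le_rfl, h0, hh⟩
  | cons σ L ih =>
    obtain ⟨hle, hne, hhom⟩ := ih
    have h1 : applyList L A ≤ σ.toFun (applyList L A) := σ.le_star _ hne hhom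
    refine ⟨hle.trans h1, ?_, σ.hom _ hne hhom⟩
    intro hz
    rw [applyList_cons] at hz
    exact hne (le_bot_iff.mp (le_trans h1 (le_of_eq hz)))

lemma applyList_mono (L : List (HomStarOp 𝒜 K)) {A B : FractionalIdeal (nonZeroDivisors R) K}
    (h0A : A ≠ 0) (h0B : B ≠ 0) (hhA : IsHomFrac 𝒜 K A) (hhB : IsHomFrac 𝒜 K B) (h : A ≤ B) :
    applyList L A ≤ applyList L B := by
  induction L with
  | nil => exact h
  | cons σ L ih =>
    exact σ.mono _ _ (applyList_facts L h0A hhA).2.1 (applyList_facts L h0B hhB).2.1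
      (applyList_facts L h0A hhA).2.2 (applyList_facts L h0B hhB).2.2 ih

lemma applyList_spanSingleton {x : K} (hx0 : x ≠ 0) (hx : IsHomElem 𝒜 K x)
    (L : List (HomStarOp 𝒜 K)) :
    applyList L (spanSingleton (nonZeroDivisors R) x) = spanSingleton (nonZeroDivisors R) x := by
  induction L with
  | nil => rfl
  | cons σ L ih => rw [applyList_cons, ih, σ.map_span x hx0 hx]

lemma isHomElem_inv {s : R} (hs0 : s ≠ 0) (hs : SetLike.IsHomogeneousElem 𝒜 s) :
    IsHomElem 𝒜 K ((algebraMap R K s)⁻¹) :=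
  ⟨1, s, SetLike.isHomogeneousElem_one 𝒜, hs, hs0, by
    rw [inv_mul_cancel₀ (aK_ne hs0), _root_.map_one]⟩

lemma le_span_inv {A : FractionalIdeal (nonZeroDivisors R) K} {s : R} (hs0 : s ≠ 0)
    (hle : spanSingleton (nonZeroDivisors R) (algebraMap R K s) * A ≤ 1) :
    A ≤ spanSingleton (nonZeroDivisors R) (algebraMap R K s)⁻¹ := by
  have h1 : spanSingleton (nonZeroDivisors R) (algebraMap R K s)⁻¹ *
      (spanSingleton (nonZeroDivisors R) (algebraMap R K s) * A) ≤
      spanSingleton (nonZeroDivisors R) (algebraMap R K s)⁻¹ * 1 :=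
    mul_right_mono hle
  rwa [mul_one, ← mul_assoc, FractionalIdeal.spanSingleton_mul_spanSingleton,
    inv_mul_cancel₀ (aK_ne hs0), FractionalIdeal.spanSingleton_one, one_mul] at h1

lemma applyList_le_span_inv (L : List (HomStarOp 𝒜 K))
    {A : FractionalIdeal (nonZeroDivisors R) K} (h0 : A ≠ 0)
    (hh : IsHomFrac 𝒜 K A) {s : R} (hs0 : s ≠ 0) (hs : SetLike.IsHomogeneousElem 𝒜 s)
    (hle : spanSingleton (nonZeroDivisors R) (algebraMap R K s) * A ≤ 1) :
    applyList L A ≤ spanSingleton (nonZeroDivisors R) (algebraMap R K s)⁻¹ := by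
  have hx0 : (algebraMap R K s)⁻¹ ≠ 0 := inv_ne_zero (aK_ne hs0)
  have h1 : applyList L A ≤ applyList L (spanSingleton (nonZeroDivisors R) (algebraMap R K s)⁻¹) :=
    applyList_mono L h0 (FractionalIdeal.spanSingleton_ne_zero_iff.mpr hx0)
      hh (isHomFrac_spanSingleton (isHomElem_inv hs0 hs)) (le_span_inv hs0 hle)
  rwa [applyList_spanSingleton hx0 (isHomElem_inv hs0 hs)] at h1
section YSec

variable (Y : Set (HomStarOp 𝒜 K))

/-- Index type of admissible lists. -/
def GoodList : Type _ := {L : List (HomStarOp 𝒜 K) // L ≠ [] ∧ ∀ σ ∈ L, σ ∈ Y}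

/-- The underlying submodule of the supremum operation. -/
def tSub (A : FractionalIdeal (nonZeroDivisors R) K) : Submodule R K :=
  ⨆ i : GoodList Y, ↑(applyList i.1 A)

lemma tSub_le_span_inv {A : FractionalIdeal (nonZeroDivisors R) K} (h0 : A ≠ 0)
    (hh : IsHomFrac 𝒜 K A) {s : R} (hs0 : s ≠ 0) (hs : SetLike.IsHomogeneousElem 𝒜 s)
    (hle : spanSingleton (nonZeroDivisors R) (algebraMap R K s) * A ≤ 1) :
    tSub Y A ≤ ↑(spanSingleton (nonZeroDivisors R) (algebraMap R K s)⁻¹) := by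
  refine iSup_le fun i => ?_
  exact FractionalIdeal.coe_le_coe.mpr (applyList_le_span_inv i.1 h0 hh hs0 hs hle)

lemma tSub_isFractional {A : FractionalIdeal (nonZeroDivisors R) K} (h0 : A ≠ 0)
    (hh : IsHomFrac 𝒜 K A) : IsFractional (nonZeroDivisors R) (tSub Y A) := by
  obtain ⟨s, hs0, hs, hle, hI⟩ := hh
  exact FractionalIdeal.isFractional_of_le
    (tSub_le_span_inv Y h0 ⟨s, hs0, hs, hle, hI⟩ hs0 hs hle)

/-- The candidate supremum operation. -/
noncomputable def tFun (A : FractionalIdeal (nonZeroDivisors R) K) :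
    FractionalIdeal (nonZeroDivisors R) K :=
  if h : A ≠ 0 ∧ IsHomFrac 𝒜 K A then ⟨tSub Y A, tSub_isFractional Y h.1 h.2⟩ else A

lemma coe_tFun {A : FractionalIdeal (nonZeroDivisors R) K} (h0 : A ≠ 0)
    (hh : IsHomFrac 𝒜 K A) : (tFun Y A : Submodule R K) = tSub Y A := by
  have e : tFun Y A = ⟨tSub Y A, tSub_isFractional Y h0 hh⟩ := dif_pos ⟨h0, hh⟩
  rw [e]
  rfl

lemma applyList_le_tFun {A : FractionalIdeal (nonZeroDivisors R) K} (h0 : A ≠ 0)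
    (hh : IsHomFrac 𝒜 K A) {L : List (HomStarOp 𝒜 K)} (hL : L ≠ [] ∧ ∀ σ ∈ L, σ ∈ Y) :
    applyList L A ≤ tFun Y A := by
  rw [← FractionalIdeal.coe_le_coe, coe_tFun Y h0 hh]
  exact le_iSup (fun i : GoodList Y => (applyList i.1 A : Submodule R K)) ⟨L, hL⟩

variable {Y} in
lemma goodList_nonempty (hY : Y.Nonempty) : Nonempty (GoodList Y) := by
  obtain ⟨u, hu⟩ := hY
  exact ⟨⟨[u], List.cons_ne_nil _ _, by simpa using hu⟩⟩

variable {Y} in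
lemma goodList_directed {A : FractionalIdeal (nonZeroDivisors R) K} (h0 : A ≠ 0)
    (hh : IsHomFrac 𝒜 K A) :
    Directed (· ≤ ·) fun i : GoodList Y => (applyList i.1 A : Submodule R K) := by
  rintro ⟨L₁, hL₁⟩ ⟨L₂, hL₂⟩
  refine ⟨⟨L₁ ++ L₂, by simp [hL₁.1], by
    intro σ hσ
    rcases List.mem_append.mp hσ with h | h
    exacts [hL₁.2 σ h, hL₂.2 σ h]⟩, ?_, ?_⟩
  · refine FractionalIdeal.coe_le_coe.mpr ?_
    rw [applyList_append]
    exact applyList_mono L₁ h0 (applyList_facts L₂ h0 hh).2.1 hh (applyList_facts L₂ h0 hh).2.2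
      (applyList_facts L₂ h0 hh).1
  · refine FractionalIdeal.coe_le_coe.mpr ?_
    rw [applyList_append]
    exact (applyList_facts L₁ (applyList_facts L₂ h0 hh).2.1 (applyList_facts L₂ h0 hh).2.2).1

variable {Y} in
lemma mem_tFun (hY : Y.Nonempty) {A : FractionalIdeal (nonZeroDivisors R) K} (h0 : A ≠ 0)
    (hh : IsHomFrac 𝒜 K A) {x : K} :
    x ∈ tFun Y A ↔ ∃ L : List (HomStarOp 𝒜 K), L ≠ [] ∧ (∀ σ ∈ L, σ ∈ Y) ∧
      x ∈ applyList L A := by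
  have := goodList_nonempty (𝒜 := 𝒜) (K := K) hY
  rw [← FractionalIdeal.mem_coe, coe_tFun Y h0 hh, tSub,
    Submodule.mem_iSup_of_directed _ (goodList_directed h0 hh)]
  constructor
  · rintro ⟨⟨L, hL1, hL2⟩, hx⟩
    exact ⟨L, hL1, hL2, FractionalIdeal.mem_coe.mp hx⟩
  · rintro ⟨L, hL1, hL2, hx⟩
    exact ⟨⟨L, hL1, hL2⟩, FractionalIdeal.mem_coe.mpr hx⟩

end YSec
lemma exists_mem_ne_zero {A : FractionalIdeal (nonZeroDivisors R) K} (h0 : A ≠ 0) :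
    ∃ x ∈ A, x ≠ 0 := by
  by_contra hc
  push_neg at hc
  refine h0 (FractionalIdeal.ext fun x => ?_)
  rw [FractionalIdeal.mem_zero_iff]
  exact ⟨fun hx => hc x hx, by rintro rfl; exact zero_mem _⟩

lemma ne_zero_of_mem {A : FractionalIdeal (nonZeroDivisors R) K} {x : K} (hx : x ∈ A)
    (hx0 : x ≠ 0) : A ≠ 0 := by
  rintro rfl
  exact hx0 ((FractionalIdeal.mem_zero_iff _).mp hx)

lemma fg_spanSingleton (x : K) :
    ((spanSingleton (nonZeroDivisors R) x : FractionalIdeal (nonZeroDivisors R) K) :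
      Submodule R K).FG := by
  rw [FractionalIdeal.coe_spanSingleton]
  exact Submodule.fg_span (Set.finite_singleton x)

lemma exists_fg {A : FractionalIdeal (nonZeroDivisors R) K} (h0 : A ≠ 0)
    (hh : IsHomFrac 𝒜 K A) :
    ∃ B : FractionalIdeal (nonZeroDivisors R) K,
      B ≠ 0 ∧ B ≤ A ∧ IsHomFrac 𝒜 K B ∧ (B : Submodule R K).FG := by
  obtain ⟨s, hs0, hs, hle, hI⟩ := hh
  obtain ⟨a, haA, ha0⟩ := exists_mem_ne_zero h0
  have hy : algebraMap R K s * a ∈ spanSingleton (nonZeroDivisors R) (algebraMap R K s) * A :=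
    mem_span_mul.mpr ⟨a, haA, rfl⟩
  obtain ⟨g, hg⟩ := (FractionalIdeal.mem_one_iff _).mp (hle hy)
  have hg0 : g ≠ 0 := by
    rintro rfl
    rw [_root_.map_zero] at hg
    exact mul_ne_zero (aK_ne hs0) ha0 hg.symm
  have hgI : g ∈ idealOf K (spanSingleton (nonZeroDivisors R) (algebraMap R K s) * A) := by
    rw [mem_idealOf, hg]
    exact hy
  have hproj : ∃ γ : Γ, GradedRing.proj 𝒜 γ g ≠ 0 := by
    by_contra hcon
    push_neg at hcon
    apply hg0
    have := DirectSum.sum_support_decompose 𝒜 g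
    rw [← this]
    refine Finset.sum_eq_zero fun γ _ => ?_
    have := hcon γ
    rwa [GradedRing.proj_apply] at this
  obtain ⟨γ, hγ⟩ := hproj
  set h := GradedRing.proj 𝒜 γ g with hdef
  have hhI : h ∈ idealOf K (spanSingleton (nonZeroDivisors R) (algebraMap R K s) * A) :=
    hI g hgI γ
  have hhhom : SetLike.IsHomogeneousElem 𝒜 h := by
    rw [hdef, GradedRing.proj_apply]
    exact ⟨γ, SetLike.coe_mem _⟩
  obtain ⟨a', ha'A, ha'⟩ := mem_span_mul.mp (mem_idealOf.mp hhI)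
  have ha'0 : a' ≠ 0 := by
    rintro rfl
    rw [mul_zero] at ha'
    have hz : algebraMap R K h = 0 := ha'.symm
    exact hγ (aK_inj (by rw [hz, _root_.map_zero]))
  refine ⟨spanSingleton (nonZeroDivisors R) a',
    FractionalIdeal.spanSingleton_ne_zero_iff.mpr ha'0,
    FractionalIdeal.spanSingleton_le_iff_mem.mpr ha'A, ?_, fg_spanSingleton a'⟩
  refine isHomFrac_spanSingleton ⟨h, s, hhhom, hs, hs0, ?_⟩
  rw [mul_comm]
  exact ha'

section YSec2

variable {Y : Set (HomStarOp 𝒜 K)}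

variable (𝒜) in
/-- The family of finitely generated homogeneous nonzero subideals. -/
def IsFgSub (A B : FractionalIdeal (nonZeroDivisors R) K) : Prop :=
  B ≠ 0 ∧ B ≤ A ∧ IsHomFrac 𝒜 K B ∧ (B : Submodule R K).FG

lemma isFgSub_sup {A B B' : FractionalIdeal (nonZeroDivisors R) K} (hB : IsFgSub 𝒜 A B)
    (hB' : IsFgSub 𝒜 A B') : IsFgSub 𝒜 A (B + B') := by
  obtain ⟨h1, h2, h3, h4⟩ := hB
  obtain ⟨h1', h2', h3', h4'⟩ := hB'
  refine ⟨?_, ?_, isHomFrac_sup h3 h3', ?_⟩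
  · intro hz
    rw [← FractionalIdeal.sup_eq_add] at hz
    exact h1 (le_bot_iff.mp (le_trans le_sup_left (le_of_eq hz)))
  · rw [← FractionalIdeal.sup_eq_add]
    exact sup_le h2 h2'
  · rw [FractionalIdeal.coe_add]
    exact Submodule.FG.sup h4 h4'

lemma finite_character (hFT : ∀ u ∈ Y, IsFiniteTypeHomStar 𝒜 K u)
    (L : List (HomStarOp 𝒜 K)) (hL : ∀ σ ∈ L, σ ∈ Y)
    {A : FractionalIdeal (nonZeroDivisors R) K} (hA0 : A ≠ 0) (hAh : IsHomFrac 𝒜 K A)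
    {C : FractionalIdeal (nonZeroDivisors R) K} (hC : IsFgSub 𝒜 (applyList L A) C) :
    ∃ B : FractionalIdeal (nonZeroDivisors R) K, IsFgSub 𝒜 A B ∧ C ≤ applyList L B := by
  induction L generalizing C with
  | nil => exact ⟨C, hC, le_rfl⟩
  | cons σ L ih =>
    have hσY : σ ∈ Y := hL σ (List.mem_cons_self (a := σ) (l := L))
    have hL' : ∀ τ ∈ L, τ ∈ Y := fun τ hτ => hL τ (List.mem_cons_of_mem σ hτ)
    obtain ⟨hC0, hCle, hCh, hCfg⟩ := hC
    have hD0 : applyList L A ≠ 0 := (applyList_facts L hA0 hAh).2.1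
    have hDh : IsHomFrac 𝒜 K (applyList L A) := (applyList_facts L hA0 hAh).2.2
    have hset := hFT σ hσY (applyList L A) hD0 hDh
    -- every element of `σ (applyList L A)` lies in `σ D` for some fg homogeneous `D`
    have hmem : ∀ y : K, y ∈ σ.toFun (applyList L A) →
        ∃ D, IsFgSub 𝒜 (applyList L A) D ∧ y ∈ σ.toFun D := by
      intro y hy
      have : y ∈ homFinTypeSet 𝒜 K σ.toFun (applyList L A) := by
        rw [← hset]; exact hy
      simp only [homFinTypeSet, Set.mem_iUnion, Set.mem_setOf_eq] at this
      obtain ⟨D, ⟨hD1, hD2, hD3, hD4⟩, hyD⟩ := this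
      exact ⟨D, ⟨hD1, hD2, hD3, hD4⟩, hyD⟩
    -- find one fg homogeneous `D` working for a whole finite set
    obtain ⟨T, hT⟩ := hCfg
    have hTmem : ∀ y ∈ T, (y : K) ∈ σ.toFun (applyList L A) := by
      intro y hy
      refine hCle (FractionalIdeal.mem_coe.mp ?_)
      rw [← hT]
      exact Submodule.subset_span hy
    have hclaim : ∀ T' : Finset K, (∀ y ∈ T', (y : K) ∈ σ.toFun (applyList L A)) →
        ∃ D, IsFgSub 𝒜 (applyList L A) D ∧ ∀ y ∈ T', (y : K) ∈ σ.toFun D := by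
      classical
      intro T'
      induction T' using Finset.induction_on with
      | empty =>
        intro _
        obtain ⟨D, hD1, hD2, hD3, hD4⟩ := exists_fg hD0 hDh
        exact ⟨D, ⟨hD1, hD2, hD3, hD4⟩, by simp⟩
      | insert a T' hnotmem ih' =>
        intro hTm
        obtain ⟨D, hD, hDT⟩ := ih' (fun y hy => hTm y (Finset.mem_insert_of_mem hy))
        obtain ⟨D', hD', haD'⟩ := hmem a (hTm a (Finset.mem_insert_self a T'))
        refine ⟨D + D', isFgSub_sup hD hD', ?_⟩
        have hsub : D ≤ D + D' := by
          rw [← FractionalIdeal.sup_eq_add]; exact le_sup_left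
        have hsub' : D' ≤ D + D' := by
          rw [← FractionalIdeal.sup_eq_add]; exact le_sup_right
        have hDD' := isFgSub_sup hD hD'
        intro y hy
        rcases Finset.mem_insert.mp hy with rfl | hy'
        · exact σ.mono D' (D + D') hD'.1 hDD'.1 hD'.2.2.1 hDD'.2.2.1 hsub' haD'
        · exact σ.mono D (D + D') hD.1 hDD'.1 hD.2.2.1 hDD'.2.2.1 hsub (hDT y hy')
    obtain ⟨D, hD, hDT⟩ := hclaim T hTmem
    have hCD : C ≤ σ.toFun D := by
      rw [← FractionalIdeal.coe_le_coe, ← hT, Submodule.span_le]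
      intro y hy
      exact FractionalIdeal.mem_coe.mpr (hDT y hy)
    obtain ⟨B, hB, hDB⟩ := ih hL' hD
    refine ⟨B, hB, ?_⟩
    rw [applyList_cons]
    refine le_trans hCD (σ.mono D (applyList L B) hD.1 (applyList_facts L hB.1 hB.2.2.1).2.1
      hD.2.2.1 (applyList_facts L hB.1 hB.2.2.1).2.2 hDB)

end YSec2
lemma ne_zero_of_le {A B : FractionalIdeal (nonZeroDivisors R) K} (h0 : A ≠ 0) (h : A ≤ B) :
    B ≠ 0 := fun hz => h0 (le_bot_iff.mp (h.trans (le_of_eq hz)))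

lemma span_mul_ne_zero {x : K} (hx0 : x ≠ 0) {A : FractionalIdeal (nonZeroDivisors R) K}
    (h0 : A ≠ 0) : spanSingleton (nonZeroDivisors R) x * A ≠ 0 := by
  obtain ⟨a, haA, ha0⟩ := exists_mem_ne_zero h0
  exact ne_zero_of_mem (mem_span_mul.mpr ⟨a, haA, rfl⟩) (mul_ne_zero hx0 ha0)

lemma span_mul_le_one_of_le_inv {s : R} (hs0 : s ≠ 0)
    {J : FractionalIdeal (nonZeroDivisors R) K}
    (h : J ≤ spanSingleton (nonZeroDivisors R) (algebraMap R K s)⁻¹) :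
    spanSingleton (nonZeroDivisors R) (algebraMap R K s) * J ≤ 1 := by
  have h2 : spanSingleton (nonZeroDivisors R) (algebraMap R K s) * J ≤
      spanSingleton (nonZeroDivisors R) (algebraMap R K s) *
        spanSingleton (nonZeroDivisors R) (algebraMap R K s)⁻¹ :=
    mul_right_mono h
  rwa [FractionalIdeal.spanSingleton_mul_spanSingleton, mul_inv_cancel₀ (aK_ne hs0),
    FractionalIdeal.spanSingleton_one] at h2

lemma applyList_span_mul {x : K} (hx0 : x ≠ 0) (hx : IsHomElem 𝒜 K x)
    (L : List (HomStarOp 𝒜 K)) {A : FractionalIdeal (nonZeroDivisors R) K} (h0 : A ≠ 0)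
    (hh : IsHomFrac 𝒜 K A) :
    applyList L (spanSingleton (nonZeroDivisors R) x * A)
      = spanSingleton (nonZeroDivisors R) x * applyList L A := by
  induction L with
  | nil => rfl
  | cons σ L ih =>
    rw [applyList_cons, applyList_cons, ih,
      σ.map_smul x hx0 hx (applyList L A) (applyList_facts L h0 hh).2.1
        (applyList_facts L h0 hh).2.2]

section YSec3

variable {Y : Set (HomStarOp 𝒜 K)}

lemma tFun_le_star (hY : Y.Nonempty) {A : FractionalIdeal (nonZeroDivisors R) K} (h0 : A ≠ 0)
    (hh : IsHomFrac 𝒜 K A) : A ≤ tFun Y A := by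
  obtain ⟨u, hu⟩ := hY
  refine le_trans (u.le_star A h0 hh) ?_
  exact applyList_le_tFun Y h0 hh
    ⟨List.cons_ne_nil _ _, fun σ hσ => by rw [List.mem_singleton] at hσ; exact hσ ▸ hu⟩

lemma tFun_ne_zero (hY : Y.Nonempty) {A : FractionalIdeal (nonZeroDivisors R) K} (h0 : A ≠ 0)
    (hh : IsHomFrac 𝒜 K A) : tFun Y A ≠ 0 :=
  ne_zero_of_le h0 (tFun_le_star hY h0 hh)

lemma tFun_le_span_inv {A : FractionalIdeal (nonZeroDivisors R) K} (h0 : A ≠ 0)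
    (hh : IsHomFrac 𝒜 K A) {s : R} (hs0 : s ≠ 0) (hs : SetLike.IsHomogeneousElem 𝒜 s)
    (hle : spanSingleton (nonZeroDivisors R) (algebraMap R K s) * A ≤ 1) :
    tFun Y A ≤ spanSingleton (nonZeroDivisors R) (algebraMap R K s)⁻¹ := by
  rw [← FractionalIdeal.coe_le_coe, coe_tFun Y h0 hh]
  exact tSub_le_span_inv Y h0 hh hs0 hs hle

lemma tFun_hom (hY : Y.Nonempty) {A : FractionalIdeal (nonZeroDivisors R) K} (h0 : A ≠ 0)
    (hh : IsHomFrac 𝒜 K A) : IsHomFrac 𝒜 K (tFun Y A) := by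
  obtain ⟨s, hs0, hs, hle, hI⟩ := hh
  have hh' : IsHomFrac 𝒜 K A := ⟨s, hs0, hs, hle, hI⟩
  refine ⟨s, hs0, hs, span_mul_le_one_of_le_inv hs0 (tFun_le_span_inv h0 hh' hs0 hs hle), ?_⟩
  intro f hf γ
  rw [mem_idealOf] at hf
  obtain ⟨y, hy, hyEq⟩ := mem_span_mul.mp hf
  obtain ⟨L, hL1, hL2, hyL⟩ := (mem_tFun hY h0 hh').mp hy
  have hLle1 : spanSingleton (nonZeroDivisors R) (algebraMap R K s) * applyList L A ≤ 1 :=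
    span_mul_le_one_of_le_inv hs0 (applyList_le_span_inv L h0 hh' hs0 hs hle)
  have hLI : IsHomIdeal 𝒜
      (idealOf K (spanSingleton (nonZeroDivisors R) (algebraMap R K s) * applyList L A)) :=
    witness_change (applyList_facts L h0 hh').2.2 hs0 hs hLle1
  have hfL : f ∈ idealOf K
      (spanSingleton (nonZeroDivisors R) (algebraMap R K s) * applyList L A) := by
    rw [mem_idealOf]
    exact mem_span_mul.mpr ⟨y, hyL, hyEq⟩
  have hproj := hLI f hfL γ
  rw [mem_idealOf] at hproj ⊢
  exact mul_right_mono (applyList_le_tFun Y h0 hh' ⟨hL1, hL2⟩) hproj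

lemma tFun_map_span (hY : Y.Nonempty) {x : K} (hx0 : x ≠ 0) (hx : IsHomElem 𝒜 K x) :
    tFun Y (spanSingleton (nonZeroDivisors R) x) = spanSingleton (nonZeroDivisors R) x := by
  have h0 : (spanSingleton (nonZeroDivisors R) x : FractionalIdeal (nonZeroDivisors R) K) ≠ 0 :=
    FractionalIdeal.spanSingleton_ne_zero_iff.mpr hx0
  have hh := isHomFrac_spanSingleton (𝒜 := 𝒜) (K := K) hx
  apply FractionalIdeal.ext
  intro y
  rw [mem_tFun hY h0 hh]
  constructor
  · rintro ⟨L, -, -, hyL⟩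
    rwa [applyList_spanSingleton hx0 hx] at hyL
  · intro hy
    obtain ⟨u, hu⟩ := hY
    exact ⟨[u], List.cons_ne_nil _ _,
      fun σ hσ => by rw [List.mem_singleton] at hσ; exact hσ ▸ hu,
      by rwa [applyList_spanSingleton hx0 hx]⟩

lemma tFun_map_smul (hY : Y.Nonempty) {x : K} (hx0 : x ≠ 0) (hx : IsHomElem 𝒜 K x)
    {A : FractionalIdeal (nonZeroDivisors R) K} (h0 : A ≠ 0) (hh : IsHomFrac 𝒜 K A) :
    tFun Y (spanSingleton (nonZeroDivisors R) x * A)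
      = spanSingleton (nonZeroDivisors R) x * tFun Y A := by
  have hxA0 : spanSingleton (nonZeroDivisors R) x * A ≠ 0 := span_mul_ne_zero hx0 h0
  have hxAh : IsHomFrac 𝒜 K (spanSingleton (nonZeroDivisors R) x * A) :=
    isHomFrac_span_mul hx hh
  apply FractionalIdeal.ext
  intro y
  rw [mem_tFun hY hxA0 hxAh, mem_span_mul]
  constructor
  · rintro ⟨L, h1, h2, hyL⟩
    rw [applyList_span_mul hx0 hx L h0 hh] at hyL
    obtain ⟨a, haF, haEq⟩ := mem_span_mul.mp hyL
    exact ⟨a, (mem_tFun hY h0 hh).mpr ⟨L, h1, h2, haF⟩, haEq⟩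
  · rintro ⟨a, haT, haEq⟩
    obtain ⟨L, h1, h2, haF⟩ := (mem_tFun hY h0 hh).mp haT
    exact ⟨L, h1, h2, by
      rw [applyList_span_mul hx0 hx L h0 hh]
      exact mem_span_mul.mpr ⟨a, haF, haEq⟩⟩

lemma tFun_mono (hY : Y.Nonempty) {A B : FractionalIdeal (nonZeroDivisors R) K} (h0A : A ≠ 0)
    (h0B : B ≠ 0) (hhA : IsHomFrac 𝒜 K A) (hhB : IsHomFrac 𝒜 K B) (h : A ≤ B) :
    tFun Y A ≤ tFun Y B := by
  intro x hx
  obtain ⟨L, h1, h2, hxL⟩ := (mem_tFun hY h0A hhA).mp hx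
  exact (mem_tFun hY h0B hhB).mpr ⟨L, h1, h2, applyList_mono L h0A h0B hhA hhB h hxL⟩

lemma fg_le_exists_goodList (hY : Y.Nonempty) {A : FractionalIdeal (nonZeroDivisors R) K}
    (h0 : A ≠ 0) (hh : IsHomFrac 𝒜 K A) {C : FractionalIdeal (nonZeroDivisors R) K}
    (hfg : (C : Submodule R K).FG) (hle : C ≤ tFun Y A) :
    ∃ L : List (HomStarOp 𝒜 K), (L ≠ [] ∧ ∀ σ ∈ L, σ ∈ Y) ∧ C ≤ applyList L A := by
  obtain ⟨T, hT⟩ := hfg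
  have hclaim : ∀ T' : Finset K, (∀ y ∈ T', (y : K) ∈ tFun Y A) →
      ∃ L : List (HomStarOp 𝒜 K), (L ≠ [] ∧ ∀ σ ∈ L, σ ∈ Y) ∧
        ∀ y ∈ T', (y : K) ∈ applyList L A := by
    classical
    intro T'
    induction T' using Finset.induction_on with
    | empty =>
      intro _
      obtain ⟨u, hu⟩ := hY
      exact ⟨[u], ⟨List.cons_ne_nil _ _,
        fun σ hσ => by rw [List.mem_singleton] at hσ; exact hσ ▸ hu⟩, by simp⟩
    | insert a T' hnotmem ih' =>
      intro hTm
      obtain ⟨L, hLg, hLT⟩ := ih' (fun y hy => hTm y (Finset.mem_insert_of_mem hy))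
      obtain ⟨L', hL'1, hL'2, haL'⟩ :=
        (mem_tFun hY h0 hh).mp (hTm a (Finset.mem_insert_self a T'))
      obtain ⟨k, hk1, hk2⟩ := goodList_directed h0 hh ⟨L, hLg⟩ ⟨L', hL'1, hL'2⟩
      refine ⟨k.1, k.2, ?_⟩
      intro y hy
      rcases Finset.mem_insert.mp hy with rfl | hy'
      · exact FractionalIdeal.mem_coe.mp (hk2 (FractionalIdeal.mem_coe.mpr haL'))
      · exact FractionalIdeal.mem_coe.mp (hk1 (FractionalIdeal.mem_coe.mpr (hLT y hy')))
  obtain ⟨L, hLg, hLT⟩ := hclaim T (fun y hy => hle (FractionalIdeal.mem_coe.mp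
    (hT ▸ Submodule.subset_span hy)))
  refine ⟨L, hLg, ?_⟩
  rw [← FractionalIdeal.coe_le_coe, ← hT, Submodule.span_le]
  intro y hy
  exact FractionalIdeal.mem_coe.mpr (hLT y hy)

lemma tFun_mem_fg (hY : Y.Nonempty) (hFT : ∀ u ∈ Y, IsFiniteTypeHomStar 𝒜 K u)
    {A : FractionalIdeal (nonZeroDivisors R) K} (h0 : A ≠ 0) (hh : IsHomFrac 𝒜 K A) {x : K}
    (hx : x ∈ tFun Y A) : ∃ B, IsFgSub 𝒜 A B ∧ x ∈ tFun Y B := by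
  obtain ⟨L, hL1, hL2, hxL⟩ := (mem_tFun hY h0 hh).mp hx
  cases L with
  | nil => exact absurd rfl hL1
  | cons σ L'' =>
    have hσY : σ ∈ Y := hL2 σ (List.mem_cons_self (a := σ) (l := L''))
    have hL''Y : ∀ τ ∈ L'', τ ∈ Y := fun τ hτ => hL2 τ (List.mem_cons_of_mem σ hτ)
    have hF0 : applyList L'' A ≠ 0 := (applyList_facts L'' h0 hh).2.1
    have hFh : IsHomFrac 𝒜 K (applyList L'' A) := (applyList_facts L'' h0 hh).2.2
    rw [applyList_cons] at hxL
    have hset := hFT σ hσY _ hF0 hFh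
    have hx2 : x ∈ homFinTypeSet 𝒜 K σ.toFun (applyList L'' A) := by
      rw [← hset]; exact hxL
    simp only [homFinTypeSet, Set.mem_iUnion, Set.mem_setOf_eq] at hx2
    obtain ⟨C, ⟨hC1, hC2, hC3, hC4⟩, hxC⟩ := hx2
    obtain ⟨B, hB, hCB⟩ := finite_character hFT L'' hL''Y h0 hh ⟨hC1, hC2, hC3, hC4⟩
    refine ⟨B, hB, ?_⟩
    have hFB0 : applyList L'' B ≠ 0 := (applyList_facts L'' hB.1 hB.2.2.1).2.1
    have hFBh : IsHomFrac 𝒜 K (applyList L'' B) := (applyList_facts L'' hB.1 hB.2.2.1).2.2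
    have hxB : x ∈ σ.toFun (applyList L'' B) :=
      σ.mono C _ hC1 hFB0 hC3 hFBh hCB hxC
    refine applyList_le_tFun Y hB.1 hB.2.2.1
      (L := σ :: L'') ⟨List.cons_ne_nil _ _, hL2⟩ ?_
    rw [applyList_cons]
    exact hxB

lemma tFun_idem (hY : Y.Nonempty) (hFT : ∀ u ∈ Y, IsFiniteTypeHomStar 𝒜 K u)
    {A : FractionalIdeal (nonZeroDivisors R) K} (h0 : A ≠ 0) (hh : IsHomFrac 𝒜 K A) :
    tFun Y (tFun Y A) = tFun Y A := by
  have ht0 : tFun Y A ≠ 0 := tFun_ne_zero hY h0 hh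
  have hth : IsHomFrac 𝒜 K (tFun Y A) := tFun_hom hY h0 hh
  refine le_antisymm ?_ (tFun_le_star hY ht0 hth)
  intro x hx
  obtain ⟨B, hB, hxB⟩ := tFun_mem_fg hY hFT ht0 hth hx
  obtain ⟨L₀, hL₀g, hBL₀⟩ := fg_le_exists_goodList hY h0 hh hB.2.2.2 hB.2.1
  obtain ⟨L, hL1, hL2, hxL⟩ := (mem_tFun hY hB.1 hB.2.2.1).mp hxB
  have hF0 : applyList L₀ A ≠ 0 := (applyList_facts L₀ h0 hh).2.1
  have hFh : IsHomFrac 𝒜 K (applyList L₀ A) := (applyList_facts L₀ h0 hh).2.2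
  have h1 : applyList L B ≤ applyList L (applyList L₀ A) :=
    applyList_mono L hB.1 hF0 hB.2.2.1 hFh hBL₀
  refine (mem_tFun hY h0 hh).mpr ⟨L ++ L₀, by simp [hL1], ?_, ?_⟩
  · intro τ hτ
    rcases List.mem_append.mp hτ with hm | hm
    exacts [hL2 τ hm, hL₀g.2 τ hm]
  · rw [applyList_append]
    exact h1 hxL

lemma tFun_finiteType (hY : Y.Nonempty) (hFT : ∀ u ∈ Y, IsFiniteTypeHomStar 𝒜 K u)
    {A : FractionalIdeal (nonZeroDivisors R) K} (h0 : A ≠ 0) (hh : IsHomFrac 𝒜 K A) :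
    {x : K | x ∈ tFun Y A} = homFinTypeSet 𝒜 K (tFun Y) A := by
  ext x
  simp only [Set.mem_setOf_eq, homFinTypeSet, Set.mem_iUnion, Set.mem_setOf_eq]
  constructor
  · intro hx
    obtain ⟨B, hB, hxB⟩ := tFun_mem_fg hY hFT h0 hh hx
    exact ⟨B, ⟨hB.1, hB.2.1, hB.2.2.1, hB.2.2.2⟩, hxB⟩
  · rintro ⟨B, ⟨hB1, hB2, hB3, hB4⟩, hxB⟩
    exact tFun_mono hY hB1 h0 hB3 hh hB2 hxB

lemma applyList_le_w (w : HomStarOp 𝒜 K)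
    (hw : ∀ u ∈ Y, ∀ A : FractionalIdeal (nonZeroDivisors R) K, A ≠ 0 → IsHomFrac 𝒜 K A →
      u.toFun A ≤ w.toFun A)
    (L : List (HomStarOp 𝒜 K)) (hL : ∀ σ ∈ L, σ ∈ Y)
    {A : FractionalIdeal (nonZeroDivisors R) K} (h0 : A ≠ 0) (hh : IsHomFrac 𝒜 K A) :
    applyList L A ≤ w.toFun A := by
  induction L with
  | nil => exact w.le_star A h0 hh
  | cons σ L ih =>
    have hσY : σ ∈ Y := hL σ (List.mem_cons_self (a := σ) (l := L))
    have hL' : ∀ τ ∈ L, τ ∈ Y := fun τ hτ => hL τ (List.mem_cons_of_mem σ hτ)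
    have hF0 : applyList L A ≠ 0 := (applyList_facts L h0 hh).2.1
    have hFh : IsHomFrac 𝒜 K (applyList L A) := (applyList_facts L h0 hh).2.2
    have h1 : σ.toFun (applyList L A) ≤ w.toFun (applyList L A) := hw σ hσY _ hF0 hFh
    have hw0 : w.toFun A ≠ 0 := ne_zero_of_le h0 (w.le_star A h0 hh)
    have hwh : IsHomFrac 𝒜 K (w.toFun A) := w.hom A h0 hh
    have h2 : w.toFun (applyList L A) ≤ w.toFun (w.toFun A) :=
      w.mono _ _ hF0 hw0 hFh hwh (ih hL')
    rw [w.idem A h0 hh] at h2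
    exact le_trans h1 h2

lemma tFun_le_w (hY : Y.Nonempty) (w : HomStarOp 𝒜 K)
    (hw : ∀ u ∈ Y, ∀ A : FractionalIdeal (nonZeroDivisors R) K, A ≠ 0 → IsHomFrac 𝒜 K A →
      u.toFun A ≤ w.toFun A)
    {A : FractionalIdeal (nonZeroDivisors R) K} (h0 : A ≠ 0) (hh : IsHomFrac 𝒜 K A) :
    tFun Y A ≤ w.toFun A := by
  intro x hx
  obtain ⟨L, -, hL2, hxL⟩ := (mem_tFun hY h0 hh).mp hx
  exact applyList_le_w w hw L hL2 h0 hh hxL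

end YSec3
end StarSup
end StarSup
/-- for a nonempty `Y ⊆ HStar_f(R)`, the supremum `⋁(Y)` is of finite type and
`A^{⋁(Y)} = ⋃ {A^{σ₁∘⋯∘σₙ} : σᵢ ∈ Y}`. -/
theorem stmt_18
    {Γ : Type*} [AddCommMonoid Γ] [LinearOrder Γ] [IsOrderedCancelAddMonoid Γ] [DecidableEq Γ]
    {R : Type*} [CommRing R] [IsDomain R]
    (𝒜 : Γ → AddSubgroup R) [GradedRing 𝒜]
    (K : Type*) [Field K] [Algebra R K] [IsFractionRing R K]
    (Y : Set (HomStarOp 𝒜 K)) (hY : Y.Nonempty)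
    (hFT : ∀ u ∈ Y, IsFiniteTypeHomStar 𝒜 K u) :
    ∃ t : HomStarOp 𝒜 K, IsFiniteTypeHomStar 𝒜 K t ∧
      (∀ u ∈ Y, ∀ A : FractionalIdeal (nonZeroDivisors R) K, A ≠ 0 → IsHomFrac 𝒜 K A →
        u.toFun A ≤ t.toFun A) ∧
      (∀ w : HomStarOp 𝒜 K,
        (∀ u ∈ Y, ∀ A : FractionalIdeal (nonZeroDivisors R) K, A ≠ 0 → IsHomFrac 𝒜 K A →
          u.toFun A ≤ w.toFun A) →
        (∀ A : FractionalIdeal (nonZeroDivisors R) K, A ≠ 0 → IsHomFrac 𝒜 K A →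
          t.toFun A ≤ w.toFun A)) ∧
      (∀ A : FractionalIdeal (nonZeroDivisors R) K, A ≠ 0 → IsHomFrac 𝒜 K A →
        {x : K | x ∈ t.toFun A} =
          {x : K | ∃ L : List (HomStarOp 𝒜 K), L ≠ [] ∧ (∀ σ ∈ L, σ ∈ Y) ∧
            x ∈ (L.foldr (fun σ f => σ.toFun ∘ f) id) A}) := by
  classical
  refine ⟨⟨StarSup.tFun Y,
    fun A h0 hh => StarSup.tFun_hom hY h0 hh,
    fun x hx0 hx => StarSup.tFun_map_span hY hx0 hx,
    fun x hx0 hx A h0 hh => StarSup.tFun_map_smul hY hx0 hx h0 hh,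
    fun A h0 hh => StarSup.tFun_le_star hY h0 hh,
    fun A B h0A h0B hhA hhB h => StarSup.tFun_mono hY h0A h0B hhA hhB h,
    fun A h0 hh => StarSup.tFun_idem hY hFT h0 hh⟩,
    ?_, ?_, ?_, ?_⟩
  · intro A h0 hh
    exact StarSup.tFun_finiteType hY hFT h0 hh
  · intro u hu A h0 hh
    exact StarSup.applyList_le_tFun Y h0 hh (L := [u])
      ⟨List.cons_ne_nil _ _, fun σ hσ => by rw [List.mem_singleton] at hσ; exact hσ ▸ hu⟩
  · intro w hw A h0 hh
    exact StarSup.tFun_le_w hY w hw h0 hh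
  · intro A h0 hh
    ext x
    simp only [Set.mem_setOf_eq]
    exact StarSup.mem_tFun hY h0 hh
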